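/- Fix nonnegative integers m, c, k with m ≥ c+1. The number of words of length 2m-1 over the alphabet {M, D, U} having exactly k occurrences of M, m-c-1-k occurrences of D, m+c occurrences of U, and containing no occurrence of the consecutive pattern UD, equals binom(m-c-1, k) * binom(m+c+k, k). -/

import Mathlib

/-- The three-letter alphabet {M, D, U}. -/
inductive MDU : Type
  | M | D | U
deriving DecidableEq

open MDU


instance : Fintype MDU := ⟨{M, D, U}, by intro x; cases x <;> simp⟩

def Pr (x y : MDU) : Prop := ¬(x = U ∧ y = D)

def S (k d u : ℕ) : Set (List MDU) :=
  {w | w.count M = k ∧ w.count D = d ∧ w.count U = u ∧ List.Chain' Pr w}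

def T (k d u : ℕ) : Set (List MDU) :=
  {w ∈ S k d u | w.head? ≠ some D}

lemma count_sum (w : List MDU) : w.count M + w.count D + w.count U = w.length := by
  induction w with
  | nil => simp
  | cons x t ih => cases x <;> first | rfl | (simp [List.count_cons]; omega)

lemma S_finite (k d u : ℕ) : (S k d u).Finite := by
  apply (List.finite_length_eq MDU (k + d + u)).subset
  rintro w ⟨h1, h2, h3, -⟩
  have := count_sum w
  simp only [Set.mem_setOf_eq]
  omega

lemma T_finite (k d u : ℕ) : (T k d u).Finite :=
  (S_finite k d u).subset (fun _ h => h.1)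

lemma mem_S {k d u : ℕ} {w : List MDU} :
    w ∈ S k d u ↔ w.count M = k ∧ w.count D = d ∧ w.count U = u ∧ List.Chain' Pr w :=
  Iff.rfl

lemma chain'_consM {t : List MDU} : List.Chain' Pr (M :: t) ↔ List.Chain' Pr t := by
  simp only [List.Chain']
  rw [List.isChain_cons]
  simp [Pr]

lemma chain'_consD {t : List MDU} : List.Chain' Pr (D :: t) ↔ List.Chain' Pr t := by
  simp only [List.Chain']
  rw [List.isChain_cons]
  simp [Pr]

lemma chain'_consU {t : List MDU} :
    List.Chain' Pr (U :: t) ↔ (t.head? ≠ some D ∧ List.Chain' Pr t) := by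
  simp only [List.Chain']
  rw [List.isChain_cons]
  constructor
  · rintro ⟨h1, h2⟩
    refine ⟨?_, h2⟩
    intro hd
    exact h1 D (by simp [hd]) ⟨rfl, rfl⟩
  · rintro ⟨h1, h2⟩
    refine ⟨?_, h2⟩
    rintro y hy ⟨-, rfl⟩
    exact h1 (by simpa using hy)

lemma splitM (k d u : ℕ) :
    S (k + 1) d u ∩ {w | w.head? = some M} = (M :: ·) '' S k d u := by
  ext w
  constructor
  · rintro ⟨hw, hh⟩
    obtain ⟨t, rfl⟩ : ∃ t, w = M :: t := by
      cases w with
      | nil => simp at hh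
      | cons x t => simp only [Set.mem_setOf_eq, List.head?_cons, Option.some.injEq] at hh; exact ⟨t, by rw [hh]⟩
    obtain ⟨h1, h2, h3, h4⟩ := hw
    refine ⟨t, ⟨?_, ?_, ?_, chain'_consM.mp h4⟩, rfl⟩ <;>
      first | rfl | (simp [List.count_cons] at h1 h2 h3 ⊢; omega)
  · rintro ⟨t, ⟨h1, h2, h3, h4⟩, rfl⟩
    refine ⟨⟨?_, ?_, ?_, chain'_consM.mpr h4⟩, rfl⟩ <;> first | rfl | (simp [List.count_cons]; omega)

lemma splitD (k d u : ℕ) :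
    S k (d + 1) u ∩ {w | w.head? = some D} = (D :: ·) '' S k d u := by
  ext w
  constructor
  · rintro ⟨hw, hh⟩
    obtain ⟨t, rfl⟩ : ∃ t, w = D :: t := by
      cases w with
      | nil => simp at hh
      | cons x t => simp only [Set.mem_setOf_eq, List.head?_cons, Option.some.injEq] at hh; exact ⟨t, by rw [hh]⟩
    obtain ⟨h1, h2, h3, h4⟩ := hw
    refine ⟨t, ⟨?_, ?_, ?_, chain'_consD.mp h4⟩, rfl⟩ <;>
      first | rfl | (simp [List.count_cons] at h1 h2 h3 ⊢; omega)
  · rintro ⟨t, ⟨h1, h2, h3, h4⟩, rfl⟩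
    refine ⟨⟨?_, ?_, ?_, chain'_consD.mpr h4⟩, rfl⟩ <;> first | rfl | (simp [List.count_cons]; omega)

lemma splitU (k d u : ℕ) :
    S k d (u + 1) ∩ {w | w.head? = some U} = (U :: ·) '' T k d u := by
  ext w
  constructor
  · rintro ⟨hw, hh⟩
    obtain ⟨t, rfl⟩ : ∃ t, w = U :: t := by
      cases w with
      | nil => simp at hh
      | cons x t => simp only [Set.mem_setOf_eq, List.head?_cons, Option.some.injEq] at hh; exact ⟨t, by rw [hh]⟩
    obtain ⟨h1, h2, h3, h4⟩ := hw
    obtain ⟨hc1, hc2⟩ := chain'_consU.mp h4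
    refine ⟨t, ⟨⟨?_, ?_, ?_, hc2⟩, hc1⟩, rfl⟩ <;>
      first | rfl | (simp [List.count_cons] at h1 h2 h3 ⊢; omega)
  · rintro ⟨t, ⟨⟨h1, h2, h3, h4⟩, h5⟩, rfl⟩
    refine ⟨⟨?_, ?_, ?_, chain'_consU.mpr ⟨h5, h4⟩⟩, rfl⟩ <;> first | rfl | (simp [List.count_cons]; omega)

lemma splitM0 (d u : ℕ) : S 0 d u ∩ {w | w.head? = some M} = ∅ := by
  ext w
  simp only [Set.mem_inter_iff, Set.mem_empty_iff_false, iff_false, not_and]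
  rintro ⟨h1, -, -, -⟩ hh
  cases w with
  | nil => simp at hh
  | cons x t =>
    simp only [Set.mem_setOf_eq, List.head?_cons, Option.some.injEq] at hh
    subst hh
    simp [List.count_cons] at h1

lemma splitD0 (k u : ℕ) : S k 0 u ∩ {w | w.head? = some D} = ∅ := by
  ext w
  simp only [Set.mem_inter_iff, Set.mem_empty_iff_false, iff_false, not_and]
  rintro ⟨-, h1, -, -⟩ hh
  cases w with
  | nil => simp at hh
  | cons x t =>
    simp only [Set.mem_setOf_eq, List.head?_cons, Option.some.injEq] at hh
    subst hh
    simp [List.count_cons] at h1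

lemma splitU0 (k d : ℕ) : S k d 0 ∩ {w | w.head? = some U} = ∅ := by
  ext w
  simp only [Set.mem_inter_iff, Set.mem_empty_iff_false, iff_false, not_and]
  rintro ⟨-, -, h1, -⟩ hh
  cases w with
  | nil => simp at hh
  | cons x t =>
    simp only [Set.mem_setOf_eq, List.head?_cons, Option.some.injEq] at hh
    subst hh
    simp [List.count_cons] at h1

lemma splitNil (k d u : ℕ) :
    S k d u ∩ {w | w.head? = none} =
      if k = 0 ∧ d = 0 ∧ u = 0 then {([] : List MDU)} else ∅ := by
  ext w
  simp only [Set.mem_inter_iff, Set.mem_setOf_eq, List.head?_eq_none_iff]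
  constructor
  · rintro ⟨⟨h1, h2, h3, -⟩, rfl⟩
    simp at h1 h2 h3
    simp [← h1, ← h2, ← h3]
  · intro hw
    by_cases h : k = 0 ∧ d = 0 ∧ u = 0
    · simp [h] at hw
      subst hw
      obtain ⟨rfl, rfl, rfl⟩ := h
      exact ⟨⟨by simp, by simp, by simp, List.isChain_nil⟩, rfl⟩
    · simp [h] at hw

lemma S_partition (k d u : ℕ) :
    S k d u = (S k d u ∩ {w | w.head? = none}) ∪ (S k d u ∩ {w | w.head? = some M})
      ∪ (S k d u ∩ {w | w.head? = some D}) ∪ (S k d u ∩ {w | w.head? = some U}) := by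
  ext w
  simp only [Set.mem_union, Set.mem_inter_iff, Set.mem_setOf_eq]
  constructor
  · intro hw
    cases hw2 : w.head? with
    | none => tauto
    | some x => cases x <;> tauto
  · tauto

lemma T_partition (k d u : ℕ) :
    T k d u = (S k d u ∩ {w | w.head? = none}) ∪ (S k d u ∩ {w | w.head? = some M})
      ∪ (S k d u ∩ {w | w.head? = some U}) := by
  ext w
  simp only [T, Set.mem_union, Set.mem_inter_iff, Set.mem_setOf_eq, Set.mem_sep_iff]
  constructor
  · rintro ⟨hw, hh⟩
    cases hw2 : w.head? with
    | none => tauto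
    | some x => cases x <;> simp_all <;> tauto
  · rintro ((h | h) | h) <;> exact ⟨h.1, fun hD => by rw [h.2] at hD; simp at hD⟩

lemma disj (A : Set (List MDU)) (o1 o2 : Option MDU) (h : o1 ≠ o2) :
    Disjoint (A ∩ {w | w.head? = o1}) (A ∩ {w | w.head? = o2}) := by
  apply Set.disjoint_left.mpr
  rintro w ⟨-, h1⟩ ⟨-, h2⟩
  simp only [Set.mem_setOf_eq] at h1 h2
  exact h (h1 ▸ h2 ▸ rfl)

lemma S_ncard_split (k d u : ℕ) :
    (S k d u).ncard = (S k d u ∩ {w | w.head? = none}).ncard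
      + (S k d u ∩ {w | w.head? = some M}).ncard
      + (S k d u ∩ {w | w.head? = some D}).ncard
      + (S k d u ∩ {w | w.head? = some U}).ncard := by
  have hfin := S_finite k d u
  have f0 : (S k d u ∩ {w | w.head? = none}).Finite := hfin.subset Set.inter_subset_left
  have f1 : (S k d u ∩ {w | w.head? = some M}).Finite := hfin.subset Set.inter_subset_left
  have f2 : (S k d u ∩ {w | w.head? = some D}).Finite := hfin.subset Set.inter_subset_left
  have f3 : (S k d u ∩ {w | w.head? = some U}).Finite := hfin.subset Set.inter_subset_left
  nth_rewrite 1 [S_partition k d u]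
  rw [Set.ncard_union_eq (Set.disjoint_union_left.mpr
      ⟨Set.disjoint_union_left.mpr ⟨disj _ _ _ (by simp), disj _ _ _ (by simp)⟩,
        disj _ _ _ (by simp)⟩) ((f0.union f1).union f2) f3,
    Set.ncard_union_eq (Set.disjoint_union_left.mpr
      ⟨disj _ _ _ (by simp), disj _ _ _ (by simp)⟩) (f0.union f1) f2,
    Set.ncard_union_eq (disj _ _ _ (by simp)) f0 f1]

lemma T_ncard_split (k d u : ℕ) :
    (T k d u).ncard = (S k d u ∩ {w | w.head? = none}).ncard
      + (S k d u ∩ {w | w.head? = some M}).ncard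
      + (S k d u ∩ {w | w.head? = some U}).ncard := by
  have hfin := S_finite k d u
  have f0 : (S k d u ∩ {w | w.head? = none}).Finite := hfin.subset Set.inter_subset_left
  have f1 : (S k d u ∩ {w | w.head? = some M}).Finite := hfin.subset Set.inter_subset_left
  have f3 : (S k d u ∩ {w | w.head? = some U}).Finite := hfin.subset Set.inter_subset_left
  rw [T_partition k d u,
    Set.ncard_union_eq (Set.disjoint_union_left.mpr
      ⟨disj _ _ _ (by simp), disj _ _ _ (by simp)⟩) (f0.union f1) f3,
    Set.ncard_union_eq (disj _ _ _ (by simp)) f0 f1]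

lemma key : ∀ (n k d u : ℕ), k + d + u = n →
    (S k d u).ncard = (d + k).choose k * (u + k).choose k ∧
    (T k d u).ncard = (d + k - 1).choose d * (u + k).choose k := by
  intro n
  induction n using Nat.strong_induction_on with
  | _ n ih =>
    intro k d u hn
    rcases k with _ | k <;> rcases d with _ | d <;> rcases u with _ | u
    -- (0,0,0)
    · constructor
      · rw [S_ncard_split, splitNil, splitM0, splitD0, splitU0, if_pos ⟨rfl, rfl, rfl⟩]
        simp
      · rw [T_ncard_split, splitNil, splitM0, splitU0, if_pos ⟨rfl, rfl, rfl⟩]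
        simp
    -- (0,0,u+1)
    · have hU := (ih (0 + 0 + u) (by omega) 0 0 u rfl).2
      constructor
      · rw [S_ncard_split, splitNil, splitM0, splitD0, splitU,
          Set.ncard_image_of_injective _ List.cons_injective, hU, if_neg (by simp)]
        simp
      · rw [T_ncard_split, splitNil, splitM0, splitU,
          Set.ncard_image_of_injective _ List.cons_injective, hU, if_neg (by simp)]
        simp
    -- (0,d+1,0)
    · have hD := (ih (0 + d + 0) (by omega) 0 d 0 rfl).1
      constructor
      · rw [S_ncard_split, splitNil, splitM0, splitD,
          Set.ncard_image_of_injective _ List.cons_injective, hD, splitU0, if_neg (by simp)]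
        simp
      · rw [T_ncard_split, splitNil, splitM0, splitU0, if_neg (by simp)]
        simpa using (Nat.choose_eq_zero_of_lt (Nat.lt_succ_self d)).symm
    -- (0,d+1,u+1)
    · have hD := (ih (0 + d + (u + 1)) (by omega) 0 d (u + 1) rfl).1
      have hU := (ih (0 + (d + 1) + u) (by omega) 0 (d + 1) u rfl).2
      constructor
      · rw [S_ncard_split, splitNil, splitM0, splitD, splitU,
          Set.ncard_image_of_injective _ List.cons_injective,
          Set.ncard_image_of_injective _ List.cons_injective, hD, hU, if_neg (by simp)]
        simp [Nat.choose_eq_zero_of_lt (Nat.lt_succ_self d)]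
      · rw [T_ncard_split, splitNil, splitM0, splitU,
          Set.ncard_image_of_injective _ List.cons_injective, hU, if_neg (by simp)]
        simp [Nat.choose_eq_zero_of_lt (Nat.lt_succ_self d)]
    -- (k+1,0,0)
    · have hM := (ih (k + 0 + 0) (by omega) k 0 0 rfl).1
      constructor
      · rw [S_ncard_split, splitNil, splitM,
          Set.ncard_image_of_injective _ List.cons_injective, hM, splitD0, splitU0,
          if_neg (by simp)]
        simp
      · rw [T_ncard_split, splitNil, splitM,
          Set.ncard_image_of_injective _ List.cons_injective, hM, splitU0, if_neg (by simp)]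
        simp
    -- (k+1,0,u+1)
    · have hM := (ih (k + 0 + (u + 1)) (by omega) k 0 (u + 1) rfl).1
      have hU := (ih ((k + 1) + 0 + u) (by omega) (k + 1) 0 u rfl).2
      have pas : (u + 1 + (k + 1)).choose (k + 1)
          = (u + k + 1).choose k + (u + k + 1).choose (k + 1) := by
        rw [show u + 1 + (k + 1) = (u + k + 1) + 1 by ring, Nat.choose_succ_succ]
      constructor
      · rw [S_ncard_split, splitNil, splitM, splitD0, splitU,
          Set.ncard_image_of_injective _ List.cons_injective,
          Set.ncard_image_of_injective _ List.cons_injective, hM, hU, if_neg (by simp), pas]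
        simp only [Nat.choose_self, Nat.choose_zero_right, zero_add, one_mul, mul_one,
          Nat.zero_add]
        rw [show u + 1 + k = u + k + 1 by ring, show u + (k + 1) = u + k + 1 by ring]
        simp
      · rw [T_ncard_split, splitNil, splitM, splitU,
          Set.ncard_image_of_injective _ List.cons_injective,
          Set.ncard_image_of_injective _ List.cons_injective, hM, hU, if_neg (by simp), pas]
        simp only [Nat.choose_self, Nat.choose_zero_right, zero_add, one_mul, mul_one,
          Nat.zero_add]
        rw [show u + 1 + k = u + k + 1 by ring, show u + (k + 1) = u + k + 1 by ring]
        simp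
    -- (k+1,d+1,0)
    · have hM := (ih (k + (d + 1) + 0) (by omega) k (d + 1) 0 rfl).1
      have hD := (ih ((k + 1) + d + 0) (by omega) (k + 1) d 0 rfl).1
      have pas : (d + 1 + (k + 1)).choose (k + 1)
          = (d + k + 1).choose k + (d + k + 1).choose (k + 1) := by
        rw [show d + 1 + (k + 1) = (d + k + 1) + 1 by ring, Nat.choose_succ_succ]
      have hsym : (d + 1 + (k + 1) - 1).choose (d + 1) = (d + k + 1).choose k := by
        rw [show d + 1 + (k + 1) - 1 = d + k + 1 by omega,
          ← Nat.choose_symm (show k ≤ d + k + 1 by omega)]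
        congr 1
        omega
      constructor
      · rw [S_ncard_split, splitNil, splitM, splitD, splitU0,
          Set.ncard_image_of_injective _ List.cons_injective,
          Set.ncard_image_of_injective _ List.cons_injective, hM, hD, if_neg (by simp), pas]
        simp only [Nat.choose_self, Nat.choose_zero_right, zero_add, one_mul, mul_one,
          Nat.zero_add, Set.ncard_empty, add_zero]
        rw [show d + 1 + k = d + k + 1 by ring, show d + (k + 1) = d + k + 1 by ring]
      · rw [T_ncard_split, splitNil, splitM, splitU0,
          Set.ncard_image_of_injective _ List.cons_injective, hM, if_neg (by simp), hsym]
        simp only [Nat.choose_self, Nat.choose_zero_right, zero_add, one_mul, mul_one,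
          Nat.zero_add, Set.ncard_empty, add_zero]
        rw [show d + 1 + k = d + k + 1 by ring]
    -- (k+1,d+1,u+1)
    · have hM := (ih (k + (d + 1) + (u + 1)) (by omega) k (d + 1) (u + 1) rfl).1
      have hD := (ih ((k + 1) + d + (u + 1)) (by omega) (k + 1) d (u + 1) rfl).1
      have hU := (ih ((k + 1) + (d + 1) + u) (by omega) (k + 1) (d + 1) u rfl).2
      have pasd : (d + 1 + (k + 1)).choose (k + 1)
          = (d + k + 1).choose k + (d + k + 1).choose (k + 1) := by
        rw [show d + 1 + (k + 1) = (d + k + 1) + 1 by ring, Nat.choose_succ_succ]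
      have pasu : (u + 1 + (k + 1)).choose (k + 1)
          = (u + k + 1).choose k + (u + k + 1).choose (k + 1) := by
        rw [show u + 1 + (k + 1) = (u + k + 1) + 1 by ring, Nat.choose_succ_succ]
      have hsym : (d + 1 + (k + 1) - 1).choose (d + 1) = (d + k + 1).choose k := by
        rw [show d + 1 + (k + 1) - 1 = d + k + 1 by omega,
          ← Nat.choose_symm (show k ≤ d + k + 1 by omega)]
        congr 1
        omega
      constructor
      · rw [S_ncard_split, splitNil, splitM, splitD, splitU,
          Set.ncard_image_of_injective _ List.cons_injective,
          Set.ncard_image_of_injective _ List.cons_injective,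
          Set.ncard_image_of_injective _ List.cons_injective,
          hM, hD, hU, if_neg (by simp), pasd, pasu, hsym]
        rw [show d + 1 + k = d + k + 1 by ring, show d + (k + 1) = d + k + 1 by ring,
          show u + 1 + k = u + k + 1 by ring, show u + (k + 1) = u + k + 1 by ring]
        simp only [Set.ncard_empty, Nat.zero_add, zero_add]
        ring
      · rw [T_ncard_split, splitNil, splitM, splitU,
          Set.ncard_image_of_injective _ List.cons_injective,
          Set.ncard_image_of_injective _ List.cons_injective,
          hM, hU, if_neg (by simp), pasu, hsym]
        rw [show d + 1 + k = d + k + 1 by ring, show u + 1 + k = u + k + 1 by ring,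
          show u + (k + 1) = u + k + 1 by ring]
        simp only [Set.ncard_empty, Nat.zero_add, zero_add]
        ring

theorem stmt6 (m c k : ℕ) (hmc : c + 1 ≤ m) :
    Nat.card {w : List MDU //
        w.length + 1 = 2 * m ∧
        w.count M = k ∧ w.count D + c + 1 + k = m ∧ w.count U = m + c ∧
        List.Chain' (fun x y => ¬(x = U ∧ y = D)) w} =
      Nat.choose (m - c - 1) k * Nat.choose (m + c + k) k := by
  rcases le_or_gt (k + c + 1) m with h | h
  · have e : Nat.card {w : List MDU //
        w.length + 1 = 2 * m ∧
        w.count M = k ∧ w.count D + c + 1 + k = m ∧ w.count U = m + c ∧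
        List.Chain' (fun x y => ¬(x = U ∧ y = D)) w}
        = (S k (m - c - 1 - k) (m + c)).ncard := by
      rw [← Nat.card_coe_set_eq]
      refine Nat.card_congr (Equiv.subtypeEquivRight fun w => ?_)
      have hc := count_sum w
      simp only [mem_S, Pr]
      constructor
      · rintro ⟨h1, h2, h3, h4, h5⟩
        exact ⟨h2, by omega, h4, h5⟩
      · rintro ⟨h1, h2, h3, h4⟩
        exact ⟨by omega, h1, by omega, h3, h4⟩
    rw [e, (key (k + (m - c - 1 - k) + (m + c)) k (m - c - 1 - k) (m + c) rfl).1,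
      show m - c - 1 - k + k = m - c - 1 by omega]
  · have he : IsEmpty {w : List MDU //
        w.length + 1 = 2 * m ∧
        w.count M = k ∧ w.count D + c + 1 + k = m ∧ w.count U = m + c ∧
        List.Chain' (fun x y => ¬(x = U ∧ y = D)) w} := by
      refine ⟨fun ⟨w, hw⟩ => ?_⟩
      have := hw.2.2.1
      omega
    rw [Nat.card_of_isEmpty]
    rw [Nat.choose_eq_zero_of_lt (show m - c - 1 < k by omega), zero_mul]
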